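/- Let μ, ν be real numbers with ν > 0 and μ² + ν² = 1, and let n ≥ 1. Then the real Jordan block A = J_ℝ(μ ± iν, 2n) = Ψ(J(μ+iν,n)) ∈ GL(2n,ℝ) is strongly reversible in GL(2n,ℝ); that is, there exists an invertible 2n×2n real matrix g with g² = I and g·A·g⁻¹ = A⁻¹. -/

import Mathlib

open Matrix

set_option maxHeartbeats 1000000

/-- The Jordan block `J(λ, m)`: an `m × m` matrix with `λ` on the diagonal,
`1` on the superdiagonal, and `0` elsewhere. -/
def jordanBlock {D : Type*} [Ring D] (lam : D) (m : ℕ) : Matrix (Fin m) (Fin m) D :=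
  Matrix.of fun i j => if i = j then lam else if (i : ℕ) + 1 = (j : ℕ) then 1 else 0

/-- The realification embedding `Ψ : M(n,ℂ) → M(2n,ℝ)`, replacing each complex entry
`z` by the 2×2 real block `((Re z, Im z), (-Im z, Re z))`. -/
def Psi {n : ℕ} (A : Matrix (Fin n) (Fin n) ℂ) :
    Matrix (Fin n × Fin 2) (Fin n × Fin 2) ℝ :=
  Matrix.of fun p q =>
    !![(A p.1 q.1).re, (A p.1 q.1).im; -(A p.1 q.1).im, (A p.1 q.1).re] p.2 q.2

/-- The standard embedding of `ℂ` into the real quaternions,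
sending `a + b i` to `a + b 𝐢`. -/
def toQuat (z : ℂ) : Quaternion ℝ := ⟨z.re, z.im, 0, 0⟩

/-- `X ∈ gl(n,D)` is `Ad_{GL(n,D)}`-real: there is an invertible matrix `g`
with `g X g⁻¹ = -X`. -/
def AdjReal {D : Type*} [Ring D] {ι : Type*} [Fintype ι] [DecidableEq ι]
    (X : Matrix ι ι D) : Prop :=
  ∃ g : (Matrix ι ι D)ˣ, g.val * X * (g⁻¹).val = -X

/-- `X ∈ gl(n,D)` is strongly `Ad_{GL(n,D)}`-real: there is an invertible matrix `g`
with `g² = I` and `g X g⁻¹ = -X`. -/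
def StronglyAdjReal {D : Type*} [Ring D] {ι : Type*} [Fintype ι] [DecidableEq ι]
    (X : Matrix ι ι D) : Prop :=
  ∃ g : (Matrix ι ι D)ˣ, g * g = 1 ∧ g.val * X * (g⁻¹).val = -X

/-- `A` is reversible in `GL(n,D)`: `A` is invertible and there is an invertible
matrix `g` with `g A g⁻¹ = A⁻¹`. -/
def Reversible {D : Type*} [Ring D] {ι : Type*} [Fintype ι] [DecidableEq ι]
    (A : Matrix ι ι D) : Prop :=
  ∃ a : (Matrix ι ι D)ˣ, a.val = A ∧ ∃ g : (Matrix ι ι D)ˣ, g * a * g⁻¹ = a⁻¹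

/-- `A` is strongly reversible in `GL(n,D)`: `A` is invertible and there is an
invertible matrix `g` with `g² = I` and `g A g⁻¹ = A⁻¹`. -/
def StronglyReversible {D : Type*} [Ring D] {ι : Type*} [Fintype ι] [DecidableEq ι]
    (A : Matrix ι ι D) : Prop :=
  ∃ a : (Matrix ι ι D)ˣ, a.val = A ∧ ∃ g : (Matrix ι ι D)ˣ, g * g = 1 ∧ g * a * g⁻¹ = a⁻¹

namespace Stmt8Aux

/-- entries of the conjugating matrix -/
def Hf (α : ℂ) (n i j : ℕ) : ℂ :=
  if i ≤ j ∧ j < n then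
    (-1:ℂ)^(n-1-i) * α^(2*n-2-i-j) * ((n-2-i).choose (j-i) : ℂ)
  else 0

lemma Hf_eq_zero_left {α : ℂ} {n i j : ℕ} (h : ¬ i ≤ j) : Hf α n i j = 0 := by
  simp [Hf, h]

lemma Hf_eq_zero_right {α : ℂ} {n i j : ℕ} (h : ¬ j < n) : Hf α n i j = 0 := by
  simp [Hf, h]

lemma mul_pow_succ {α β : ℂ} (hab : α * β = 1) (e : ℕ) : β * α^(e+1) = α^e := by
  rw [pow_succ]
  calc β * (α^e * α) = α^e * (α * β) := by ring
  _ = α^e := by rw [hab, mul_one]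

/-- trinomial revision, ℕ-subtraction safe -/
lemma trin (a d t : ℕ) (ht : t ≤ d) :
    a.choose t * (a - t).choose (d - t) = a.choose d * d.choose t := by
  by_cases hda : d ≤ a
  · exact (Nat.choose_mul (n := a) ht).symm
  · push_neg at hda
    rw [Nat.choose_eq_zero_of_lt hda, zero_mul]
    by_cases hta : t ≤ a
    · have : a - t < d - t := by omega
      rw [Nat.choose_eq_zero_of_lt this, mul_zero]
    · rw [Nat.choose_eq_zero_of_lt (by omega), zero_mul]

/-- key scalar identity for L2 -/
lemma key2 {α β : ℂ} (hab : α * β = 1) (n i j : ℕ) (hi : i < n) (hj : j < n) :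
    β * (if 1 ≤ j then Hf α n i (j-1) else 0) + α * Hf α n (i+1) j
      + (if 1 ≤ j then Hf α n (i+1) (j-1) else 0) = 0 := by
  rcases Nat.eq_zero_or_pos j with hj0 | hj1
  · subst hj0
    simp [Hf_eq_zero_left (by omega : ¬ i + 1 ≤ 0)]
  · rw [if_pos (by omega : 1 ≤ j), if_pos (by omega : 1 ≤ j)]
    rcases le_or_gt j i with hji | hij
    · rw [Hf_eq_zero_left (by omega), Hf_eq_zero_left (by omega),
        Hf_eq_zero_left (by omega)]
      ring
    · -- i < j
      rcases eq_or_lt_of_le (by omega : i + 1 ≤ j) with hji1 | hji2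
      · -- j = i + 1
        have v3 : Hf α n (i+1) (j-1) = 0 := Hf_eq_zero_left (by omega)
        have v1 : Hf α n i (j-1)
            = (-1:ℂ)^((n - 1 - (i+1)) + 1) * α^((2*n - 3 - 2*i) + 1) := by
          simp only [Hf, if_pos (show i ≤ j - 1 ∧ j - 1 < n by omega)]
          rw [show j - 1 - i = 0 by omega, Nat.choose_zero_right,
            show 2*n - 2 - i - (j-1) = (2*n - 3 - 2*i) + 1 by omega,
            show n - 1 - i = (n - 1 - (i+1)) + 1 by omega]
          push_cast; ring
        have v2 : Hf α n (i+1) j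
            = (-1:ℂ)^(n - 1 - (i+1)) * α^(2*n - 4 - 2*i) := by
          simp only [Hf, if_pos (show i + 1 ≤ j ∧ j < n by omega)]
          rw [show j - (i+1) = 0 by omega, Nat.choose_zero_right,
            show 2*n - 2 - (i+1) - j = 2*n - 4 - 2*i by omega]
          push_cast; ring
        rw [v1, v2, v3]
        have h1 : β * α^(2*n - 3 - 2*i + 1) = α^(2*n-3-2*i) := mul_pow_succ hab _
        have h2 : α * α^(2*n - 4 - 2*i) = α^(2*n-3-2*i) := by
          rw [← pow_succ']
          congr 1
          omega
        linear_combination (-(-1:ℂ)^(n - 1 - (i+1))) * h1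
          + ((-1:ℂ)^(n - 1 - (i+1))) * h2
      · -- i + 2 ≤ j, so i ≤ n - 3
        set m := n - 2 - (i+1) with hm
        set t := j - (i+1) - 1 with ht
        set E := 2*n - 2 - i - j with hE
        have v1 : Hf α n i (j-1)
            = (-1:ℂ)^(m+2) * α^(E+1) * (((m+1).choose (t+1) : ℕ) : ℂ) := by
          simp only [Hf, if_pos (show i ≤ j - 1 ∧ j - 1 < n by omega)]
          rw [show 2*n - 2 - i - (j-1) = E + 1 by omega,
            show n - 1 - i = m + 2 by omega,
            show n - 2 - i = m + 1 by omega, show j - 1 - i = t + 1 by omega]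
        have v2 : Hf α n (i+1) j
            = (-1:ℂ)^(m+1) * α^(E-1) * ((m.choose (t+1) : ℕ) : ℂ) := by
          simp only [Hf, if_pos (show i + 1 ≤ j ∧ j < n by omega)]
          rw [show 2*n - 2 - (i+1) - j = E - 1 by omega,
            show n - 1 - (i+1) = m + 1 by omega,
            show n - 2 - (i+1) = m from rfl, show j - (i+1) = t + 1 by omega]
        have v3 : Hf α n (i+1) (j-1)
            = (-1:ℂ)^(m+1) * α^E * ((m.choose t : ℕ) : ℂ) := by
          simp only [Hf, if_pos (show i + 1 ≤ j - 1 ∧ j - 1 < n by omega)]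
          rw [show 2*n - 2 - (i+1) - (j-1) = E by omega,
            show n - 1 - (i+1) = m + 1 by omega,
            show n - 2 - (i+1) = m from rfl, show j - 1 - (i+1) = t by omega]
        rw [v1, v2, v3]
        have h1 : β * α^(E + 1) = α^E := mul_pow_succ hab _
        have h2 : α * α^(E-1) = α^E := by
          rw [← pow_succ']
          congr 1
          omega
        have hP : (((m+1).choose (t+1) : ℕ) : ℂ)
            = (m.choose t : ℕ) + (m.choose (t+1) : ℕ) := by
          rw [Nat.choose_succ_succ]
          push_cast
          ring
        linear_combination ((-1:ℂ)^m * (((m+1).choose (t+1) : ℕ) : ℂ)) * h1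
          + ((-1:ℂ)^(m+1) * ((m.choose (t+1) : ℕ) : ℂ)) * h2
          + ((-1:ℂ)^m * α^E) * hP

end Stmt8Aux

namespace Stmt8Aux2
open Stmt8Aux

lemma Hf_top {α : ℂ} {n i : ℕ} (h : n ≤ i) (j : ℕ) : Hf α n i j = 0 := by
  rcases lt_or_ge j n with hj | hj
  · exact Hf_eq_zero_left (by omega)
  · exact Hf_eq_zero_right (by omega)

lemma key1 {α β : ℂ} (hab : α * β = 1) (n i j : ℕ) (hi : i < n) (hj : j < n) :
    ∑ k ∈ Finset.range n, Hf β n i k * Hf α n k j = if i = j then 1 else 0 := by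
  rcases lt_trichotomy j i with hji | rfl | hij
  · rw [if_neg (by omega)]
    apply Finset.sum_eq_zero
    intro k _
    rcases lt_or_ge k i with hk | hk
    · rw [Hf_eq_zero_left (show ¬ i ≤ k by omega), zero_mul]
    · rw [Hf_eq_zero_left (show ¬ k ≤ j by omega), mul_zero]
  · rw [if_pos rfl]
    rw [Finset.sum_eq_single j]
    · simp only [Hf, if_pos (show j ≤ j ∧ j < n from ⟨le_refl _, hj⟩)]
      rw [Nat.sub_self, Nat.choose_zero_right]
      push_cast
      have hm : α^(2*n-2-j-j) * β^(2*n-2-j-j) = 1 := by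
        rw [← mul_pow, hab, one_pow]
      have hs : (-1:ℂ)^(n-1-j) * (-1:ℂ)^(n-1-j) = 1 := by
        rw [← mul_pow]
        norm_num
      calc ((-1:ℂ)^(n-1-j) * β^(2*n-2-j-j) * 1) * ((-1:ℂ)^(n-1-j) * α^(2*n-2-j-j) * 1)
          = ((-1:ℂ)^(n-1-j) * (-1:ℂ)^(n-1-j)) * (α^(2*n-2-j-j) * β^(2*n-2-j-j)) := by
            ring
        _ = 1 := by rw [hm, hs, one_mul]
    · intro k _ hk
      rcases lt_or_ge k j with h | h
      · rw [Hf_eq_zero_left (show ¬ j ≤ k by omega), zero_mul]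
      · rw [Hf_eq_zero_left (show ¬ k ≤ j by omega), mul_zero]
    · intro h
      exact absurd (Finset.mem_range.2 hj) h
  · rw [if_neg (by omega)]
    set d := j - i with hd
    have hsub : Finset.Ico i (j+1) ⊆ Finset.range n := by
      intro x hx
      rw [Finset.mem_Ico] at hx
      rw [Finset.mem_range]
      omega
    rw [← Finset.sum_subset hsub (by
      intro x _ hx
      rw [Finset.mem_Ico] at hx
      rcases lt_or_ge x i with h | h
      · rw [Hf_eq_zero_left (show ¬ i ≤ x by omega), zero_mul]
      · rw [Hf_eq_zero_left (show ¬ x ≤ j by omega), mul_zero])]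
    rw [Finset.sum_Ico_eq_sum_range]
    have hrange : j + 1 - i = d + 1 := by omega
    rw [hrange]
    have hterm : ∀ t ∈ Finset.range (d+1),
        Hf β n i (i+t) * Hf α n (i+t) j
        = (β^d * ((n-2-i).choose d : ℂ)) * ((-1:ℂ)^t * ((d.choose t : ℕ) : ℂ)) := by
      intro t htm
      rw [Finset.mem_range] at htm
      have ht : t ≤ d := by omega
      simp only [Hf, if_pos (show i ≤ i + t ∧ i + t < n by omega),
        if_pos (show i + t ≤ j ∧ j < n by omega)]
      have c1 : i + t - i = t := by omega
      have c2 : n - 2 - (i+t) = (n - 2 - i) - t := by omega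
      have c3 : j - (i + t) = d - t := by omega
      rw [c1, c2, c3]
      have hch : ((n-2-i).choose t : ℂ) * (((n-2-i) - t).choose (d-t) : ℂ)
          = ((n-2-i).choose d : ℂ) * ((d.choose t : ℕ) : ℂ) := by
        rw [← Nat.cast_mul, ← Nat.cast_mul, trin _ _ _ ht]
      have hsgn : (-1:ℂ)^(n-1-i) * (-1:ℂ)^(n-1-(i+t)) = (-1:ℂ)^t := by
        rw [← pow_add, show (n-1-i) + (n-1-(i+t)) = t + 2*(n-1-i-t) by omega,
          pow_add, pow_mul, neg_one_sq, one_pow, mul_one]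
      have hpow : β^(2*n-2-i-(i+t)) * α^(2*n-2-(i+t)-j) = β^d := by
        rw [show 2*n-2-i-(i+t) = (2*n-2-(i+t)-j) + d by omega, pow_add]
        have : β^(2*n-2-(i+t)-j) * α^(2*n-2-(i+t)-j) = 1 := by
          rw [← mul_pow, mul_comm β α, hab, one_pow]
        calc β^(2*n-2-(i+t)-j) * β^d * α^(2*n-2-(i+t)-j)
            = (β^(2*n-2-(i+t)-j) * α^(2*n-2-(i+t)-j)) * β^d := by ring
          _ = β^d := by rw [this, one_mul]
      calc (-1:ℂ)^(n-1-i) * β^(2*n-2-i-(i+t)) * ((n-2-i).choose t : ℂ)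
            * ((-1:ℂ)^(n-1-(i+t)) * α^(2*n-2-(i+t)-j) * (((n-2-i) - t).choose (d-t) : ℂ))
          = ((-1:ℂ)^(n-1-i) * (-1:ℂ)^(n-1-(i+t)))
            * (β^(2*n-2-i-(i+t)) * α^(2*n-2-(i+t)-j))
            * (((n-2-i).choose t : ℂ) * (((n-2-i) - t).choose (d-t) : ℂ)) := by ring
        _ = _ := by rw [hsgn, hpow, hch]; ring
    rw [Finset.sum_congr rfl hterm, ← Finset.mul_sum]
    have halt : ∑ t ∈ Finset.range (d+1), ((-1:ℂ)^t * ((d.choose t : ℕ) : ℂ)) = 0 := by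
      have h0 := Int.alternating_sum_range_choose (n := d)
      rw [if_neg (show d ≠ 0 by omega)] at h0
      have := congrArg (fun z : ℤ => (z : ℂ)) h0
      push_cast at this
      simpa using this
    rw [halt, mul_zero]

end Stmt8Aux2


namespace Stmt8Aux3
open Stmt8Aux Stmt8Aux2

def Hmat (α : ℂ) (n : ℕ) : Matrix (Fin n) (Fin n) ℂ :=
  Matrix.of fun i j => Hf α n (i : ℕ) (j : ℕ)

lemma Hmat_mul {α β : ℂ} (hab : α * β = 1) (n : ℕ) :
    Hmat β n * Hmat α n = 1 := by
  ext i j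
  rw [Matrix.mul_apply, Matrix.one_apply]
  simp only [Hmat, Matrix.of_apply]
  rw [Fin.sum_univ_eq_sum_range (fun k => Hf β n (i:ℕ) k * Hf α n k (j:ℕ)) n]
  rw [key1 hab n i j i.isLt j.isLt]
  simp [Fin.ext_iff]

lemma jordan_split (α : ℂ) (n : ℕ) :
    jordanBlock α n = α • (1 : Matrix (Fin n) (Fin n) ℂ) + jordanBlock (0:ℂ) n := by
  ext i j
  simp only [jordanBlock, Matrix.of_apply, Matrix.add_apply, Matrix.smul_apply,
    Matrix.one_apply, smul_eq_mul]
  by_cases h : i = j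
  · subst h
    rw [if_pos rfl, if_pos rfl, if_pos rfl]
    ring
  · rw [if_neg h, if_neg h, if_neg h]
    ring

lemma mul_shift {n : ℕ} (M : Matrix (Fin n) (Fin n) ℂ) (i j : Fin n) :
    (M * jordanBlock (0:ℂ) n) i j
      = if h : 1 ≤ (j:ℕ) then M i ⟨(j:ℕ)-1, by omega⟩ else 0 := by
  rw [Matrix.mul_apply]
  by_cases hj : 1 ≤ (j:ℕ)
  · rw [dif_pos hj]
    rw [Finset.sum_eq_single (⟨(j:ℕ)-1, by omega⟩ : Fin n)]
    · simp only [jordanBlock, Matrix.of_apply]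
      rw [if_neg (show (⟨(j:ℕ)-1, by omega⟩ : Fin n) ≠ j from
          Fin.ne_of_val_ne (show (j:ℕ)-1 ≠ (j:ℕ) by omega)),
        if_pos (show (j:ℕ)-1+1 = (j:ℕ) by omega), mul_one]
    · intro k _ hk
      simp only [jordanBlock, Matrix.of_apply]
      split_ifs with h1 h2
      · exact mul_zero _
      · exact absurd (Fin.ext (show (k:ℕ) = (j:ℕ)-1 by omega)) hk
      · exact mul_zero _
    · intro h
      exact absurd (Finset.mem_univ _) h
  · rw [dif_neg hj]
    apply Finset.sum_eq_zero
    intro k _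
    simp only [jordanBlock, Matrix.of_apply]
    split_ifs with h1 h2
    · exact mul_zero _
    · exact absurd h2 (by omega)
    · exact mul_zero _

lemma shift_mul {n : ℕ} (M : Matrix (Fin n) (Fin n) ℂ) (i j : Fin n) :
    (jordanBlock (0:ℂ) n * M) i j
      = if h : (i:ℕ)+1 < n then M ⟨(i:ℕ)+1, h⟩ j else 0 := by
  rw [Matrix.mul_apply]
  by_cases hi : (i:ℕ)+1 < n
  · rw [dif_pos hi]
    rw [Finset.sum_eq_single (⟨(i:ℕ)+1, hi⟩ : Fin n)]
    · simp only [jordanBlock, Matrix.of_apply]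
      rw [if_neg (show i ≠ (⟨(i:ℕ)+1, hi⟩ : Fin n) from
          Fin.ne_of_val_ne (show (i:ℕ) ≠ (i:ℕ)+1 by omega))]
      simp
    · intro k _ hk
      simp only [jordanBlock, Matrix.of_apply]
      split_ifs with h1 h2
      · exact zero_mul _
      · exact absurd (Fin.ext (show (k:ℕ) = (i:ℕ)+1 by omega)) hk
      · exact zero_mul _
    · intro h
      exact absurd (Finset.mem_univ _) h
  · rw [dif_neg hi]
    apply Finset.sum_eq_zero
    intro k _
    simp only [jordanBlock, Matrix.of_apply]
    split_ifs with h1 h2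
    · exact zero_mul _
    · exact absurd h2 (by omega)
    · exact zero_mul _

lemma mul_jordan {n : ℕ} (M : Matrix (Fin n) (Fin n) ℂ) (α : ℂ) (i j : Fin n) :
    (M * jordanBlock α n) i j
      = α * M i j + (if h : 1 ≤ (j:ℕ) then M i ⟨(j:ℕ)-1, by omega⟩ else 0) := by
  rw [jordan_split α n, Matrix.mul_add, Matrix.mul_smul, Matrix.mul_one,
    Matrix.add_apply, Matrix.smul_apply, smul_eq_mul, mul_shift]

lemma jordan_mul {n : ℕ} (M : Matrix (Fin n) (Fin n) ℂ) (β : ℂ) (i j : Fin n) :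
    (jordanBlock β n * M) i j
      = β * M i j + (if h : (i:ℕ)+1 < n then M ⟨(i:ℕ)+1, h⟩ j else 0) := by
  rw [jordan_split β n, Matrix.add_mul, Matrix.smul_mul, Matrix.one_mul,
    Matrix.add_apply, Matrix.smul_apply, smul_eq_mul, shift_mul]

lemma jordan_conj_Hmat {α β : ℂ} (hab : α * β = 1) (n : ℕ) :
    jordanBlock β n * Hmat α n * jordanBlock α n = Hmat α n := by
  ext i j
  rw [mul_jordan]
  simp only [jordan_mul]
  have hk := key2 hab n (i:ℕ) (j:ℕ) i.isLt j.isLt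
  simp only [Hmat, Matrix.of_apply]
  by_cases h1 : 1 ≤ (j:ℕ) <;> by_cases h2 : (i:ℕ)+1 < n
  · rw [dif_pos h1, dif_pos h2, dif_pos h2, if_pos h1, if_pos h1] at *
    linear_combination hk + Hf α n (i:ℕ) (j:ℕ) * hab
  · rw [dif_pos h1, dif_neg h2, dif_neg h2, if_pos h1, if_pos h1] at *
    rw [Hf_top (show n ≤ (i:ℕ)+1 by omega), Hf_top (show n ≤ (i:ℕ)+1 by omega)] at hk
    linear_combination hk + Hf α n (i:ℕ) (j:ℕ) * hab
  · rw [dif_neg h1, dif_pos h2, if_neg h1, if_neg h1] at *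
    linear_combination hk + Hf α n (i:ℕ) (j:ℕ) * hab
  · rw [dif_neg h1, dif_neg h2, if_neg h1, if_neg h1] at *
    rw [Hf_top (show n ≤ (i:ℕ)+1 by omega)] at hk
    linear_combination hk + Hf α n (i:ℕ) (j:ℕ) * hab

end Stmt8Aux3

namespace Stmt8Psi

/-- `ℂ → M₂(ℝ)` as a ring hom, matching the block convention of `Psi`. -/
def c2m : ℂ →+* Matrix (Fin 2) (Fin 2) ℝ where
  toFun z := !![z.re, z.im; -z.im, z.re]
  map_one' := by
    ext a b
    fin_cases a <;> fin_cases b <;> simp [Matrix.one_apply]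
  map_mul' z w := by
    ext a b
    fin_cases a <;> fin_cases b <;>
      simp [Matrix.mul_apply, Fin.sum_univ_two, Complex.mul_re, Complex.mul_im] <;> ring
  map_zero' := by
    ext a b
    fin_cases a <;> fin_cases b <;> simp
  map_add' z w := by
    ext a b
    fin_cases a <;> fin_cases b <;> simp [Matrix.add_apply] <;> ring

/-- `Psi` as a ring hom. -/
def psiHom (n : ℕ) : Matrix (Fin n) (Fin n) ℂ →+* Matrix (Fin n × Fin 2) (Fin n × Fin 2) ℝ :=
  (Matrix.compRingEquiv (Fin n) (Fin 2) ℝ).toRingHom.comp (RingHom.mapMatrix c2m)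

lemma psiHom_apply {n : ℕ} (A : Matrix (Fin n) (Fin n) ℂ) : psiHom n A = Psi A := by
  ext ⟨i, a⟩ ⟨j, b⟩
  rfl

lemma Psi_mul {n : ℕ} (A B : Matrix (Fin n) (Fin n) ℂ) : Psi (A * B) = Psi A * Psi B := by
  rw [← psiHom_apply, ← psiHom_apply, ← psiHom_apply, _root_.map_mul]

lemma Psi_one {n : ℕ} : Psi (1 : Matrix (Fin n) (Fin n) ℂ) = 1 := by
  rw [← psiHom_apply, _root_.map_one]

/-- the conjugation sign matrix -/
def Cmat (n : ℕ) : Matrix (Fin n × Fin 2) (Fin n × Fin 2) ℝ :=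
  Matrix.diagonal (fun p => if p.2 = 0 then 1 else -1)

lemma Cmat_sq (n : ℕ) : Cmat n * Cmat n = 1 := by
  rw [Cmat, Matrix.diagonal_mul_diagonal]
  convert Matrix.diagonal_one
  rename_i p
  by_cases h : p.2 = 0 <;> simp [h]

lemma Cmat_Psi {n : ℕ} (X : Matrix (Fin n) (Fin n) ℂ) :
    Cmat n * Psi X = Psi (X.map (starRingEnd ℂ)) * Cmat n := by
  ext p q
  rw [Cmat, Matrix.diagonal_mul, Matrix.mul_diagonal]
  obtain ⟨i, a⟩ := p
  obtain ⟨j, b⟩ := q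
  fin_cases a <;> fin_cases b <;>
    simp [Psi, Matrix.map_apply] <;> ring

end Stmt8Psi

namespace Stmt8Final
open Stmt8Aux Stmt8Aux2 Stmt8Aux3 Stmt8Psi

lemma jordanBlock_map (α : ℂ) (n : ℕ) :
    (jordanBlock α n).map (starRingEnd ℂ) = jordanBlock (starRingEnd ℂ α) n := by
  ext i j
  simp only [jordanBlock, Matrix.map_apply, Matrix.of_apply, apply_ite (starRingEnd ℂ),
    _root_.map_one, map_zero]

lemma Hmat_map (α : ℂ) (n : ℕ) :
    (Hmat α n).map (starRingEnd ℂ) = Hmat (starRingEnd ℂ α) n := by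
  ext i j
  simp only [Hmat, Matrix.map_apply, Matrix.of_apply, Hf, apply_ite (starRingEnd ℂ),
    _root_.map_mul, map_pow, map_neg, _root_.map_one, map_natCast, map_zero]

theorem stmt8' (μ ν : ℝ) (h1 : μ ^ 2 + ν ^ 2 = 1) (n : ℕ) :
    StronglyReversible (Psi (jordanBlock ((⟨μ, ν⟩ : ℂ)) n)) := by
  set α : ℂ := ⟨μ, ν⟩ with hα
  set β : ℂ := starRingEnd ℂ α with hβ
  have hab : α * β = 1 := by
    rw [hβ, Complex.mul_conj]
    norm_cast
    simp [Complex.normSq, hα]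
    nlinarith [h1]
  have hba : β * α = 1 := by rw [mul_comm]; exact hab
  have hconjβ : starRingEnd ℂ β = α := by rw [hβ]; exact Complex.conj_conj α
  set J := jordanBlock α n with hJ
  set Jc := jordanBlock β n with hJc
  set h := Hmat β n with hh
  set k := Hmat α n with hk
  have F1 : h * k = 1 := Hmat_mul hab n
  have F1' : k * h = 1 := Hmat_mul hba n
  have F2 : Jc * k * J = k := jordan_conj_Hmat hab n
  have F3 : J * h * Jc = h := jordan_conj_Hmat hba n
  have hmapJ : J.map (starRingEnd ℂ) = Jc := jordanBlock_map α n
  have hmaph : h.map (starRingEnd ℂ) = k := by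
    rw [hh, Hmat_map, hconjβ]
  -- the unit representing `Psi J`
  have haval : Psi J * Psi (h * Jc * k) = 1 := by
    rw [← Psi_mul, show J * (h * Jc * k) = (J * h * Jc) * k by simp only [mul_assoc], F3, F1, Psi_one]
  have haval' : Psi (h * Jc * k) * Psi J = 1 := by
    rw [← Psi_mul, show (h * Jc * k) * J = h * (Jc * k * J) by simp only [mul_assoc], F2, F1, Psi_one]
  set aU : (Matrix (Fin n × Fin 2) (Fin n × Fin 2) ℝ)ˣ :=
    ⟨Psi J, Psi (h * Jc * k), haval, haval'⟩ with haU
  -- the involution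
  have hginv : (Psi h * Cmat n) * (Psi h * Cmat n) = 1 := by
    calc (Psi h * Cmat n) * (Psi h * Cmat n)
        = Psi h * (Cmat n * Psi h) * Cmat n := by simp only [mul_assoc]
      _ = Psi h * (Psi k * Cmat n) * Cmat n := by rw [Cmat_Psi, hmaph]
      _ = Psi h * Psi k * (Cmat n * Cmat n) := by simp only [mul_assoc]
      _ = 1 := by rw [Cmat_sq, mul_one, ← Psi_mul, F1, Psi_one]
  set gU : (Matrix (Fin n × Fin 2) (Fin n × Fin 2) ℝ)ˣ :=
    ⟨Psi h * Cmat n, Psi h * Cmat n, hginv, hginv⟩ with hgU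
  refine ⟨aU, rfl, gU, ?_, ?_⟩
  · exact Units.ext hginv
  · apply Units.ext
    show (Psi h * Cmat n) * Psi J * (Psi h * Cmat n) = Psi (h * Jc * k)
    calc (Psi h * Cmat n) * Psi J * (Psi h * Cmat n)
        = Psi h * (Cmat n * Psi (J * h)) * Cmat n := by
          rw [Psi_mul]; simp only [mul_assoc]
      _ = Psi h * (Psi ((J * h).map (starRingEnd ℂ)) * Cmat n) * Cmat n := by
          rw [Cmat_Psi]
      _ = Psi h * Psi ((J * h).map (starRingEnd ℂ)) * (Cmat n * Cmat n) := by simp only [mul_assoc]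
      _ = Psi (h * (Jc * k)) := by
          rw [Cmat_sq, mul_one, ← Psi_mul, Matrix.map_mul, hmapJ, hmaph]
      _ = Psi (h * Jc * k) := by rw [mul_assoc]

end Stmt8Final

/-- For real `μ, ν` with `ν > 0` and `μ² + ν² = 1`, and `n ≥ 1`, the real
Jordan block `A = J_ℝ(μ ± iν, 2n) = Ψ(J(μ+iν,n)) ∈ GL(2n,ℝ)` is strongly reversible
in `GL(2n,ℝ)`. -/
theorem stmt8 (μ ν : ℝ) (hν : 0 < ν) (h1 : μ ^ 2 + ν ^ 2 = 1) (n : ℕ) (hn : 1 ≤ n) :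
    StronglyReversible (Psi (jordanBlock ((⟨μ, ν⟩ : ℂ)) n)) := by
  exact Stmt8Final.stmt8' μ ν h1 n
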